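/- Let N be an odd positive integer and let x̃ ∈ ℂ^N with ‖x̃‖₂ = 1. Then x̃^H P_l^R x̃ = 0 and x̃^H P_l^I x̃ = 0 for all l = 1, …, (N−1)/2 if and only if |Σ_{k=0}^{N−1} x̃_k ω^{kn}| = 1 for every n = 0, …, N−1. (Proposition 2: the unit-norm vectors annihilating all the real and imaginary permutation quadratic forms are exactly those with constant-modulus time-domain samples.) -/

import Mathlib

open Matrix

/-- The cyclic permutation matrix `P_l = P^l`, with entries `(P_l)_{i,j} = 1` iff
`i ≡ j + l (mod N)`, so that `(P_l y)_i = y_{(i-l) mod N}`. -/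
def Pl (N l : ℕ) : Matrix (Fin N) (Fin N) ℂ :=
  Matrix.of fun i j => if ((i : ZMod N) = (j : ZMod N) + (l : ZMod N)) then 1 else 0

/-- The real part `P_l^R = (P_l + P_lᴴ)/2`. -/
noncomputable def PlR (N l : ℕ) : Matrix (Fin N) (Fin N) ℂ :=
  ((2 : ℂ)⁻¹) • (Pl N l + (Pl N l)ᴴ)

/-- The imaginary part `P_l^I = i(P_lᴴ - P_l)/2`. -/
noncomputable def PlI (N l : ℕ) : Matrix (Fin N) (Fin N) ℂ :=
  (Complex.I / 2) • ((Pl N l)ᴴ - Pl N l)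

set_option linter.unusedSectionVars false

section Aux
variable {N : ℕ} [NeZero N]

def eZ : Fin N ≃ ZMod N where
  toFun k := (k : ZMod N)
  invFun a := ⟨a.val, a.val_lt⟩
  left_inv k := by ext; simp [ZMod.val_natCast_of_lt k.isLt]
  right_inv a := ZMod.natCast_rightInverse a

lemma eZ_apply (k : Fin N) : eZ k = ((k : ℕ) : ZMod N) := rfl
lemma eZ_val (k : Fin N) : (eZ k).val = (k : ℕ) := ZMod.val_natCast_of_lt k.isLt

noncomputable def zz (x : Fin N → ℂ) (a : ZMod N) : ℂ := x (eZ.symm a)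

lemma zz_eZ (x : Fin N → ℂ) (k : Fin N) : zz x (eZ k) = x k := by simp [zz]

noncomputable def rr (x : Fin N → ℂ) (d : ZMod N) : ℂ :=
  ∑ a : ZMod N, (starRingEnd ℂ) (zz x a) * zz x (a + d)

lemma sum_zmod_eq (f : ℂ → ℂ) (x : Fin N → ℂ) :
    ∑ a : ZMod N, f (zz x a) = ∑ k : Fin N, f (x k) :=
  (Fintype.sum_equiv eZ (fun k => f (x k)) (fun a => f (zz x a))
    (fun k => by simp only [zz_eZ])).symm

lemma rr_neg (x : Fin N → ℂ) (d : ZMod N) :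
    (starRingEnd ℂ) (rr x d) = rr x (-d) := by
  unfold rr
  rw [map_sum]
  refine Fintype.sum_equiv (Equiv.addRight d) _ _ (fun b => ?_)
  simp only [Equiv.coe_addRight, _root_.map_mul, Complex.conj_conj,
    add_neg_cancel_right]
  ring

lemma rr_zero {x : Fin N → ℂ} (hx : ∑ k : Fin N, ‖x k‖ ^ 2 = 1) :
    rr x 0 = 1 := by
  unfold rr
  have h : ∀ a : ZMod N, (starRingEnd ℂ) (zz x a) * zz x (a + 0)
      = ((‖zz x a‖ ^ 2 : ℝ) : ℂ) := fun a => by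
    rw [add_zero, mul_comm, Complex.mul_conj, Complex.sq_norm]
  rw [Finset.sum_congr rfl (fun a _ => h a)]
  rw [sum_zmod_eq (fun c => ((‖c‖ ^ 2 : ℝ) : ℂ)) x]
  rw [← Complex.ofReal_sum, hx, Complex.ofReal_one]

end Aux

section Aux2
variable {N : ℕ} [NeZero N]

lemma form_eq (x : Fin N → ℂ) (l : ℕ) :
    star x ⬝ᵥ (Pl N l *ᵥ x) = rr x (-(l : ZMod N)) := by
  have hmv : ∀ i : Fin N, (Pl N l *ᵥ x) i = x (eZ.symm ((i : ZMod N) - (l : ZMod N))) := by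
    intro i
    simp only [Pl, mulVec, dotProduct, Matrix.of_apply, ite_mul, one_mul, zero_mul]
    have hcond : ∀ j : Fin N, ((i : ZMod N) = (j : ZMod N) + (l : ZMod N))
        ↔ j = eZ.symm ((i : ZMod N) - (l : ZMod N)) := by
      intro j
      rw [Equiv.eq_symm_apply, eq_sub_iff_add_eq, eZ_apply]
      exact eq_comm
    rw [Finset.sum_congr rfl (fun j _ => if_congr (hcond j) rfl rfl)]
    rw [Finset.sum_ite_eq' Finset.univ _ x]
    simp
  simp only [dotProduct, hmv, Pi.star_apply]
  refine Fintype.sum_equiv eZ _ _ (fun i => ?_)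
  simp only [rr, zz, ← sub_eq_add_neg, Complex.star_def, Equiv.symm_apply_apply]
  rfl

end Aux2

section Aux3
variable {N : ℕ} [NeZero N]

lemma form_conj (A : Matrix (Fin N) (Fin N) ℂ) (x : Fin N → ℂ) :
    star x ⬝ᵥ (Aᴴ *ᵥ x) = star (star x ⬝ᵥ (A *ᵥ x)) := by
  simp only [dotProduct, mulVec, conjTranspose_apply, Pi.star_apply, star_sum,
    star_mul', Finset.mul_sum]
  rw [Finset.sum_comm]
  refine Finset.sum_congr rfl fun i _ => Finset.sum_congr rfl fun j _ => ?_
  simp only [star_mul', star_star]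
  ring

lemma form_vanish {x : Fin N → ℂ} {l : ℕ}
    (hR : star x ⬝ᵥ (PlR N l *ᵥ x) = 0) (hI : star x ⬝ᵥ (PlI N l *ᵥ x) = 0) :
    star x ⬝ᵥ (Pl N l *ᵥ x) = 0 := by
  set F := star x ⬝ᵥ (Pl N l *ᵥ x) with hF
  have h1 : (2 : ℂ)⁻¹ * (F + star F) = 0 := by
    rw [← hR]
    simp only [PlR, smul_mulVec, add_mulVec, dotProduct_smul, dotProduct_add,
      form_conj, smul_eq_mul, hF]
  have h2 : (Complex.I / 2) * (star F - F) = 0 := by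
    rw [← hI]
    simp only [PlI, smul_mulVec, sub_mulVec, dotProduct_smul, dotProduct_sub,
      form_conj, smul_eq_mul, hF]
  have h1' : F + star F = 0 := by
    field_simp at h1; simpa using h1
  have h2' : star F - F = 0 := by
    have : (Complex.I / 2) ≠ 0 := by
      simp [Complex.I_ne_zero, div_eq_zero_iff]
    exact (mul_eq_zero.mp h2).resolve_left this
  have : (2 : ℂ) * star F = 0 := by linear_combination h1' + h2'
  have hsF : star F = 0 := by
    have h2ne : (2 : ℂ) ≠ 0 := two_ne_zero
    exact (mul_eq_zero.mp this).resolve_left h2ne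
  calc F = star (star F) := (star_star F).symm
  _ = 0 := by rw [hsF, star_zero]

end Aux3

section Aux4
variable {N : ℕ} [NeZero N] {ω : ℂ}

noncomputable def Xf (x : Fin N → ℂ) (ω : ℂ) (n : ℕ) : ℂ :=
  ∑ k : Fin N, x k * ω ^ ((k : ℕ) * n)

lemma Xf_eq (x : Fin N → ℂ) (ω : ℂ) (n : ℕ) :
    Xf x ω n = ∑ a : ZMod N, zz x a * ω ^ (a.val * n) :=
  Fintype.sum_equiv eZ _ _ (fun k => by simp only [zz_eZ, eZ_val])

lemma hpow (hζ : IsPrimitiveRoot ω N) {a b : ℕ} (h : a ≡ b [MOD N]) :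
    ω ^ a = ω ^ b := by
  have key : ∀ t : ℕ, ω ^ t = ω ^ (t % N) := fun t => by
    conv_lhs => rw [← Nat.div_add_mod t N]
    rw [pow_add, pow_mul, hζ.pow_eq_one, one_pow, one_mul]
  rw [key a, key b, h]

lemma hsplit (hζ : IsPrimitiveRoot ω N) (e d : ZMod N) (t : ℕ) :
    ω ^ (e.val * t) * (ω ^ (d.val * t))⁻¹ = ω ^ ((e - d).val * t) := by
  have hω0 : ω ≠ 0 := hζ.ne_zero (NeZero.ne N)
  have heq : ω ^ ((e - d).val * t) * ω ^ (d.val * t) = ω ^ (e.val * t) := by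
    rw [← pow_add, ← add_mul]
    refine hpow hζ (Nat.ModEq.mul_right t ?_)
    have h1 : (e - d + d).val = ((e - d).val + d.val) % N := ZMod.val_add _ _
    rw [sub_add_cancel] at h1
    rw [h1]
    exact (Nat.mod_modEq _ N).symm
  rw [← heq]
  exact mul_inv_cancel_right₀ (pow_ne_zero _ hω0) _

lemma conj_Xf_mul (hζ : IsPrimitiveRoot ω N) (x : Fin N → ℂ) (n : ℕ) :
    (starRingEnd ℂ) (Xf x ω n) * Xf x ω n = ∑ d : ZMod N, rr x d * ω ^ (d.val * n) := by
  have hω0 : ω ≠ 0 := hζ.ne_zero (NeZero.ne N)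
  have hconjpow : ∀ t : ℕ, (starRingEnd ℂ) (ω ^ t) = (ω ^ t)⁻¹ := by
    intro t
    have habs : ‖ω‖ = 1 := by
      have h := Complex.norm_eq_one_of_pow_eq_one hζ.pow_eq_one (NeZero.ne N)
      exact h
    rw [map_pow, ← inv_pow, Complex.inv_def, Complex.normSq_eq_norm_sq, habs]
    norm_num
  rw [Xf_eq, map_sum, Finset.sum_mul_sum]
  have lhs_eq : ∀ m : ZMod N,
      ∑ k : ZMod N, (starRingEnd ℂ) (zz x m * ω ^ (m.val * n)) * (zz x k * ω ^ (k.val * n))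
      = ∑ d : ZMod N, (starRingEnd ℂ) (zz x m) * zz x (m + d) * ω ^ (d.val * n) := by
    intro m
    refine (Fintype.sum_equiv (Equiv.addLeft m) _ _ (fun d => ?_)).symm
    show (starRingEnd ℂ) (zz x m) * zz x (m + d) * ω ^ (d.val * n)
        = (starRingEnd ℂ) (zz x m * ω ^ (m.val * n)) * (zz x (m + d) * ω ^ ((m + d).val * n))
    rw [_root_.map_mul, hconjpow]
    have h2 : ω ^ ((m + d).val * n) * (ω ^ (m.val * n))⁻¹ = ω ^ (d.val * n) := by
      rw [hsplit hζ (m + d) m n, add_sub_cancel_left]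
    rw [← h2]
    ring
  rw [Finset.sum_congr rfl (fun m _ => lhs_eq m)]
  rw [Finset.sum_comm]
  refine Finset.sum_congr rfl fun d _ => ?_
  rw [rr, Finset.sum_mul]

lemma gsum_zero (hζ : IsPrimitiveRoot ω N) {c : ZMod N} (hc : c ≠ 0) :
    ∑ n : Fin N, (ω ^ c.val) ^ (n : ℕ) = 0 := by
  rw [Fin.sum_univ_eq_sum_range (fun i => (ω ^ c.val) ^ i) N]
  have hη1 : ω ^ c.val ≠ 1 :=
    hζ.pow_ne_one_of_pos_of_lt (ZMod.val_pos.mpr hc).ne' (ZMod.val_lt c)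
  have hηN : (ω ^ c.val) ^ N = 1 := by
    rw [← pow_mul, mul_comm, pow_mul, hζ.pow_eq_one, one_pow]
  rw [geom_sum_eq hη1, hηN, sub_self, zero_div]

end Aux4


/-- Proposition 2: for odd `N` and a unit-norm `x̃ ∈ ℂ^N`, the quadratic forms
`x̃ᴴ P_l^R x̃` and `x̃ᴴ P_l^I x̃` vanish for all `l = 1, …, (N-1)/2` iff the
time-domain samples of `x̃` have constant unit modulus. -/
theorem stmt10 (N : ℕ) (hN : 0 < N) (hodd : Odd N) (ω : ℂ)
    (hω : ω = Complex.exp (2 * (Real.pi : ℂ) * Complex.I / N))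
    (x : Fin N → ℂ) (hx : ∑ k : Fin N, ‖x k‖ ^ 2 = 1) :
    (∀ l : ℕ, 1 ≤ l → l ≤ (N - 1) / 2 →
        star x ⬝ᵥ (PlR N l *ᵥ x) = 0 ∧ star x ⬝ᵥ (PlI N l *ᵥ x) = 0) ↔
      ∀ n : Fin N, ‖∑ k : Fin N, x k * ω ^ ((k : ℕ) * (n : ℕ))‖ = 1 := by
  haveI : NeZero N := ⟨hN.ne'⟩
  have hζ : IsPrimitiveRoot ω N := by
    rw [hω]; exact Complex.isPrimitiveRoot_exp N hN.ne'
  obtain ⟨m, hm⟩ := hodd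
  have formR : ∀ l : ℕ, star x ⬝ᵥ (PlR N l *ᵥ x)
      = (2:ℂ)⁻¹ * (star x ⬝ᵥ (Pl N l *ᵥ x) + star (star x ⬝ᵥ (Pl N l *ᵥ x))) := fun l => by
    simp only [PlR, smul_mulVec, add_mulVec, dotProduct_smul, dotProduct_add,
      form_conj, smul_eq_mul]
  have formI : ∀ l : ℕ, star x ⬝ᵥ (PlI N l *ᵥ x)
      = (Complex.I/2) * (star (star x ⬝ᵥ (Pl N l *ᵥ x)) - star x ⬝ᵥ (Pl N l *ᵥ x)) := fun l => by
    simp only [PlI, smul_mulVec, sub_mulVec, dotProduct_smul, dotProduct_sub,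
      form_conj, smul_eq_mul]
  have key : (∀ l : ℕ, 1 ≤ l → l ≤ (N - 1) / 2 →
        star x ⬝ᵥ (PlR N l *ᵥ x) = 0 ∧ star x ⬝ᵥ (PlI N l *ᵥ x) = 0)
      ↔ (∀ d : ZMod N, d ≠ 0 → rr x d = 0) := by
    constructor
    · intro h d hd
      have hdval : 0 < d.val := ZMod.val_pos.mpr hd
      have hdlt : d.val < N := d.val_lt
      have hdcast : ((d.val : ℕ) : ZMod N) = d := ZMod.natCast_rightInverse d
      by_cases hc : d.val ≤ (N-1)/2
      · have h0 := form_vanish (h d.val hdval hc).1 (h d.val hdval hc).2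
        rw [form_eq] at h0
        have h1 := rr_neg x (-((d.val : ℕ) : ZMod N))
        rw [h0, neg_neg, hdcast, map_zero] at h1
        exact h1.symm
      · have hl1 : 1 ≤ N - d.val := by omega
        have hl2 : N - d.val ≤ (N-1)/2 := by omega
        have h0 := form_vanish (h (N - d.val) hl1 hl2).1 (h (N - d.val) hl1 hl2).2
        rw [form_eq] at h0
        have hcast : -(((N - d.val : ℕ)) : ZMod N) = d := by
          rw [Nat.cast_sub (le_of_lt hdlt), ZMod.natCast_self, hdcast]
          ring
        rwa [hcast] at h0
    · intro h l hl1 hl2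
      have hlN : (l : ZMod N) ≠ 0 := by
        intro hc
        have hdvd := (ZMod.natCast_eq_zero_iff l N).mp hc
        have := Nat.le_of_dvd (by omega) hdvd
        omega
      have hF : star x ⬝ᵥ (Pl N l *ᵥ x) = 0 := by
        rw [form_eq]; exact h _ (neg_ne_zero.mpr hlN)
      rw [formR, formI, hF]
      simp
  rw [key]
  constructor
  · intro h n
    have hXX : (starRingEnd ℂ) (Xf x ω (n : ℕ)) * Xf x ω (n : ℕ) = 1 := by
      rw [conj_Xf_mul hζ]
      rw [Finset.sum_eq_single 0 (fun d _ hd => by rw [h d hd, zero_mul]) (by simp)]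
      rw [rr_zero hx, ZMod.val_zero, zero_mul, pow_zero, mul_one]
    show ‖Xf x ω (n : ℕ)‖ = 1
    have hns : ((Complex.normSq (Xf x ω (n : ℕ)) : ℝ) : ℂ) = 1 := by
      rw [← Complex.mul_conj, mul_comm]
      exact hXX
    have hns' : Complex.normSq (Xf x ω (n : ℕ)) = 1 := by
      exact_mod_cast hns
    rw [Complex.norm_def, hns', Real.sqrt_one]
  · intro h d hd
    have hyp1 : ∀ n : Fin N, (starRingEnd ℂ) (Xf x ω (n : ℕ)) * Xf x ω (n : ℕ) = 1 := by
      intro n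
      have habs : ‖Xf x ω (n : ℕ)‖ = 1 := h n
      have : Complex.normSq (Xf x ω (n : ℕ)) = 1 := by
        rw [Complex.normSq_eq_norm_sq, habs, one_pow]
      rw [mul_comm, Complex.mul_conj, this, Complex.ofReal_one]
    have e2 : ∑ n : Fin N, ((starRingEnd ℂ) (Xf x ω (n : ℕ)) * Xf x ω (n : ℕ))
          * (ω ^ (d.val * (n : ℕ)))⁻¹ = (N : ℂ) * rr x d := by
      have step : ∀ n : Fin N, ((starRingEnd ℂ) (Xf x ω (n : ℕ)) * Xf x ω (n : ℕ))
          * (ω ^ (d.val * (n : ℕ)))⁻¹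
          = ∑ e : ZMod N, rr x e * ω ^ ((e - d).val * (n : ℕ)) := by
        intro n
        rw [conj_Xf_mul hζ, Finset.sum_mul]
        refine Finset.sum_congr rfl fun e _ => ?_
        rw [mul_assoc, hsplit hζ e d (n : ℕ)]
      rw [Finset.sum_congr rfl (fun n _ => step n), Finset.sum_comm]
      rw [Finset.sum_eq_single d (fun e _ he => ?_) (by simp)]
      · simp only [sub_self, ZMod.val_zero, zero_mul, pow_zero, mul_one,
          Finset.sum_const, Finset.card_univ, Fintype.card_fin, nsmul_eq_mul]
      · rw [← Finset.mul_sum]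
        have : ∀ n : Fin N, ω ^ ((e - d).val * (n : ℕ)) = (ω ^ (e - d).val) ^ (n : ℕ) :=
          fun n => by rw [pow_mul]
        rw [Finset.sum_congr rfl (fun n _ => this n),
          gsum_zero hζ (sub_ne_zero.mpr he), mul_zero]
    have e1 : ∑ n : Fin N, ((starRingEnd ℂ) (Xf x ω (n : ℕ)) * Xf x ω (n : ℕ))
          * (ω ^ (d.val * (n : ℕ)))⁻¹ = 0 := by
      rw [Finset.sum_congr rfl (fun n _ => by rw [hyp1 n, one_mul])]
      have hinv : ∀ n : Fin N, (ω ^ (d.val * (n : ℕ)))⁻¹ = (ω ^ (-d).val) ^ (n : ℕ) := by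
        intro n
        have hs := hsplit hζ 0 d (n : ℕ)
        rw [ZMod.val_zero, zero_mul, pow_zero, one_mul, zero_sub] at hs
        rw [hs, pow_mul]
      rw [Finset.sum_congr rfl (fun n _ => hinv n)]
      exact gsum_zero hζ (neg_ne_zero.mpr hd)
    have : (N : ℂ) * rr x d = 0 := by rw [← e2, e1]
    have hNne : (N : ℂ) ≠ 0 := Nat.cast_ne_zero.mpr hN.ne'
    exact (mul_eq_zero.mp this).resolve_left hNne
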